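/- Let a and z be real numbers, and define c : ℕ → ℝ by c(0) = −1 and c(d+1) = (1−a)·c(d) + z·∑_{j=0}^{d} C(d,j)·c(j). Then for every d ≥ 0, c(d) equals the negative of the d-th iterated derivative at 0 of the function f_{a,z}(x) = exp(−z − (a−1)x + z·e^x). -/

import Mathlib

open Finset

private lemma my_iteratedDeriv_add {n : ℕ} {f g : ℝ → ℝ} (x : ℝ)
    (hf : ContDiff ℝ (⊤ : ℕ∞) f) (hg : ContDiff ℝ (⊤ : ℕ∞) g) :
    iteratedDeriv n (fun y => f y + g y) x = iteratedDeriv n f x + iteratedDeriv n g x := by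
  simp_rw [← iteratedDerivWithin_univ]
  exact iteratedDerivWithin_add (Set.mem_univ x) uniqueDiffOn_univ
    ((hf.of_le (by exact_mod_cast (le_top : (n : ℕ∞) ≤ ⊤))).contDiffWithinAt)
    ((hg.of_le (by exact_mod_cast (le_top : (n : ℕ∞) ≤ ⊤))).contDiffWithinAt)

private lemma my_iteratedDeriv_const_mul {n : ℕ} {f : ℝ → ℝ} (c : ℝ) (x : ℝ)
    (hf : ContDiff ℝ (⊤ : ℕ∞) f) :
    iteratedDeriv n (fun y => c * f y) x = c * iteratedDeriv n f x := by
  simp_rw [← iteratedDerivWithin_univ]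
  exact iteratedDerivWithin_const_mul (Set.mem_univ x) uniqueDiffOn_univ c
    ((hf.of_le (by exact_mod_cast (le_top : (n : ℕ∞) ≤ ⊤))).contDiffWithinAt)

private lemma pascal_sum (n : ℕ) (u : ℕ → ℝ) :
    ∑ j ∈ Finset.range (n + 2), (Nat.choose (n + 1) j : ℝ) * u j
      = ∑ j ∈ Finset.range (n + 1), (Nat.choose n j : ℝ) * (u j + u (j + 1)) := by
  have h1 := Finset.sum_range_succ' (fun j => (Nat.choose (n + 1) j : ℝ) * u j) (n + 1)
  have h2 : ∑ j ∈ Finset.range (n + 1), (Nat.choose n j : ℝ) * u j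
      = ∑ j ∈ Finset.range (n + 1), (Nat.choose n (j + 1) : ℝ) * u (j + 1)
        + (Nat.choose n 0 : ℝ) * u 0 := by
    have h3 := Finset.sum_range_succ' (fun j => (Nat.choose n j : ℝ) * u j) (n + 1)
    have h4 := Finset.sum_range_succ (fun j => (Nat.choose n j : ℝ) * u j) (n + 1)
    rw [Nat.choose_succ_self] at h4
    simp only [Nat.cast_zero, zero_mul, add_zero] at h4
    rw [← h4, h3]
  simp only [Nat.choose_succ_succ, Nat.cast_add] at h1
  rw [h1]
  simp only [mul_add, add_mul, Finset.sum_add_distrib]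
  rw [h2]
  simp [Nat.choose_zero_right]
  ring

private lemma exp_mul_leibniz {f : ℝ → ℝ} (hf : ContDiff ℝ (⊤ : ℕ∞) f) :
    ∀ (n : ℕ) (x : ℝ), iteratedDeriv n (fun y => Real.exp y * f y) x
      = ∑ j ∈ Finset.range (n + 1), (Nat.choose n j : ℝ) * (Real.exp x * iteratedDeriv j f x) := by
  have hD : ∀ j : ℕ, Differentiable ℝ (iteratedDeriv j f) := fun j =>
    hf.differentiable_iteratedDeriv j (by exact_mod_cast WithTop.coe_lt_top _)
  intro n
  induction n with
  | zero => intro x; simp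
  | succ n ih =>
    intro x
    rw [iteratedDeriv_succ, funext ih, deriv_fun_sum (A := fun j y => (Nat.choose n j : ℝ) * (Real.exp y * iteratedDeriv j f y)) (fun j _ =>
      (((Real.differentiable_exp.mul (hD j)).const_mul _) x))]
    have hterm : ∀ j ∈ Finset.range (n + 1),
        deriv (fun x => (Nat.choose n j : ℝ) * (Real.exp x * iteratedDeriv j f x)) x
          = (Nat.choose n j : ℝ) *
            ((Real.exp x * iteratedDeriv j f x) + (Real.exp x * iteratedDeriv (j + 1) f x)) := by
      intro j _
      have h := (((Real.hasDerivAt_exp x).mul ((hD j) x).hasDerivAt).const_mul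
        ((Nat.choose n j : ℝ))).deriv
      rw [iteratedDeriv_succ]
      exact h
      try ring
    rw [Finset.sum_congr rfl hterm, ← pascal_sum n (fun j => Real.exp x * iteratedDeriv j f x)]

theorem stmt_5 (a z : ℝ) (c : ℕ → ℝ) (h0 : c 0 = -1)
    (hrec : ∀ d : ℕ, c (d + 1) =
      (1 - a) * c d + z * ∑ j ∈ Finset.range (d + 1), (Nat.choose d j : ℝ) * c j) :
    ∀ d : ℕ, c d =
      -(iteratedDeriv d (fun x : ℝ => Real.exp (-z - (a - 1) * x + z * Real.exp x)) 0) := by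
  set f : ℝ → ℝ := fun x => Real.exp (-z - (a - 1) * x + z * Real.exp x) with hfdef
  have hf : ContDiff ℝ (⊤ : ℕ∞) f := by
    apply ContDiff.exp
    exact ((contDiff_const.sub (contDiff_const.mul contDiff_id)).add
      (contDiff_const.mul Real.contDiff_exp))
  have hderiv : deriv f = fun x => (1 - a) * f x + z * (Real.exp x * f x) := by
    funext x
    have hg : HasDerivAt (fun x : ℝ => -z - (a - 1) * x + z * Real.exp x)
        (0 - (a - 1) * 1 + z * Real.exp x) x :=
      ((hasDerivAt_const x (-z)).sub ((hasDerivAt_id x).const_mul (a - 1))).add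
        ((Real.hasDerivAt_exp x).const_mul z)
    have h := hg.exp.deriv
    rw [h]; simp only [hfdef]; ring
  have grec : ∀ d : ℕ, iteratedDeriv (d + 1) f 0 =
      (1 - a) * iteratedDeriv d f 0
        + z * ∑ j ∈ Finset.range (d + 1), (Nat.choose d j : ℝ) * iteratedDeriv j f 0 := by
    intro d
    have hef : ContDiff ℝ (⊤ : ℕ∞) (fun x => Real.exp x * f x) := Real.contDiff_exp.mul hf
    rw [iteratedDeriv_succ', hderiv,
      my_iteratedDeriv_add 0 (contDiff_const.mul hf) (contDiff_const.mul hef),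
      my_iteratedDeriv_const_mul (1 - a) 0 hf, my_iteratedDeriv_const_mul z 0 hef,
      exp_mul_leibniz hf d 0]
    simp [Real.exp_zero]
  intro d
  induction d using Nat.strong_induction_on with
  | _ d ih =>
    match d with
    | 0 =>
      rw [h0, iteratedDeriv_zero]
      simp [hfdef, Real.exp_zero]
    | d + 1 =>
      have hsum : ∑ j ∈ Finset.range (d + 1), (Nat.choose d j : ℝ) * c j
          = -∑ j ∈ Finset.range (d + 1), (Nat.choose d j : ℝ) * iteratedDeriv j f 0 := by
        rw [← Finset.sum_neg_distrib]
        refine Finset.sum_congr rfl fun j hj => ?_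
        rw [ih j (Finset.mem_range.mp hj)]; ring
      rw [hrec d, grec d, ih d (Nat.lt_succ_self d), hsum]; ring
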